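/- Let M₀ = diag(μ₀, …, μ_{d−1}) and N₀ = diag(ν₀, …, ν_{d−1}) be diagonal d×d real matrices with all μ_i, ν_i ∈ [0,1] and M₀ ≠ N₀, and let Φ_M, Φ_N be the measurement channels of the two-outcome POVMs {M₀, 1_d − M₀} and {N₀, 1_d − N₀}, Δ = Φ_M − Φ_N. Then (Φ_M, Φ_N) is a Maximal Entanglement Worst Case pair, i.e. ‖Δ‖_⋄ = d·‖Δ‖_ME, if and only if there is exactly one index i ∈ {0, …, d−1} with μ_i ≠ ν_i. -/

import Mathlib

open Matrix Kronecker ComplexOrder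

noncomputable section

/-- The old `Matrix.PosSemidef.sqrt` (removed from Mathlib), spelled out. -/
noncomputable def posSemidefSqrt {n : Type*} [Fintype n] [DecidableEq n] {A : Matrix n n ℂ}
    (hA : A.PosSemidef) : Matrix n n ℂ :=
  hA.1.eigenvectorUnitary.1 * diagonal ((↑) ∘ (√·) ∘ hA.1.eigenvalues) *
    (star hA.1.eigenvectorUnitary : Matrix n n ℂ)

/-- The matrix absolute value `|A| = √(AᴴA)`. -/
noncomputable def matAbs {n : Type*} [Fintype n] [DecidableEq n] (A : Matrix n n ℂ) :
    Matrix n n ℂ :=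
  posSemidefSqrt (Matrix.posSemidef_conjTranspose_mul_self A)

/-- The trace norm `‖A‖₁ = Tr √(AᴴA)`. -/
noncomputable def traceNorm {n : Type*} [Fintype n] [DecidableEq n] (A : Matrix n n ℂ) : ℝ :=
  ((matAbs A).trace).re

/-- The positive semidefinite square root of a PSD matrix (zero otherwise). -/
noncomputable def matSqrt {n : Type*} [Fintype n] [DecidableEq n] (σ : Matrix n n ℂ) :
    Matrix n n ℂ :=
  open scoped Classical in
  if h : σ.PosSemidef then posSemidefSqrt h else 0

/-- A density matrix: positive semidefinite with unit trace. -/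
def IsDensity {n : Type*} [Fintype n] [DecidableEq n] (σ : Matrix n n ℂ) : Prop :=
  σ.PosSemidef ∧ σ.trace = 1

/-- The Choi operator of a linear map between matrix algebras. -/
noncomputable def choi {d m : ℕ}
    (S : Matrix (Fin d) (Fin d) ℂ →ₗ[ℂ] Matrix (Fin m) (Fin m) ℂ) :
    Matrix (Fin m × Fin d) (Fin m × Fin d) ℂ :=
  ∑ i : Fin d, ∑ j : Fin d,
    (S (Matrix.single i j 1)) ⊗ₖ (Matrix.single i j 1)

/-- The ME-norm `‖S‖_ME = ‖J(S)‖₁ / d`. -/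
noncomputable def MENorm {d m : ℕ}
    (S : Matrix (Fin d) (Fin d) ℂ →ₗ[ℂ] Matrix (Fin m) (Fin m) ℂ) : ℝ :=
  traceNorm (choi S) / d

/-- The diamond norm: supremum over density matrices σ of
`‖(1 ⊗ √σ) J(S) (1 ⊗ √σ)‖₁`. -/
noncomputable def diamondNorm {d m : ℕ}
    (S : Matrix (Fin d) (Fin d) ℂ →ₗ[ℂ] Matrix (Fin m) (Fin m) ℂ) : ℝ :=
  ⨆ σ : {σ : Matrix (Fin d) (Fin d) ℂ // IsDensity σ},
    traceNorm (((1 : Matrix (Fin m) (Fin m) ℂ) ⊗ₖ matSqrt σ.1) * choi S *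
      ((1 : Matrix (Fin m) (Fin m) ℂ) ⊗ₖ matSqrt σ.1))

/-- The M-operator `M(S) = Tr_B |J(S)|`. -/
noncomputable def Mop {d m : ℕ}
    (S : Matrix (Fin d) (Fin d) ℂ →ₗ[ℂ] Matrix (Fin m) (Fin m) ℂ) :
    Matrix (Fin d) (Fin d) ℂ :=
  Matrix.of fun k l => ∑ b : Fin m, matAbs (choi S) (b, k) (b, l)

/-- A quantum channel: completely positive (PSD Choi operator, by Choi's theorem)
and trace preserving. -/
def IsQChannel {d m : ℕ}
    (S : Matrix (Fin d) (Fin d) ℂ →ₗ[ℂ] Matrix (Fin m) (Fin m) ℂ) : Prop :=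
  (choi S).PosSemidef ∧ ∀ ρ : Matrix (Fin d) (Fin d) ℂ, (S ρ).trace = ρ.trace

/-- A POVM with `n` outcomes on `ℂ^d`. -/
def IsPOVM {d n : ℕ} (M : Fin n → Matrix (Fin d) (Fin d) ℂ) : Prop :=
  (∀ i, (M i).PosSemidef) ∧ ∑ i, M i = 1

/-- The measurement channel of a family of POVM elements:
`Φ_M(ρ) = ∑ i, Tr(ρ M_i) |i⟩⟨i|`. -/
noncomputable def measChannel {d n : ℕ} (M : Fin n → Matrix (Fin d) (Fin d) ℂ) :
    Matrix (Fin d) (Fin d) ℂ →ₗ[ℂ] Matrix (Fin n) (Fin n) ℂ where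
  toFun ρ := ∑ i, (ρ * M i).trace • Matrix.single i i (1 : ℂ)
  map_add' ρ σ := by
    simp [add_mul, Matrix.trace_add, add_smul, Finset.sum_add_distrib]
  map_smul' c ρ := by
    simp [Matrix.smul_mul, Matrix.trace_smul, smul_smul, Finset.smul_sum]

/-- The symmetric Werner-Holevo channel `Φ₊(ρ) = (Tr(ρ)·1 + ρᵀ)/(d+1)`. -/
noncomputable def whPlus (d : ℕ) :
    Matrix (Fin d) (Fin d) ℂ →ₗ[ℂ] Matrix (Fin d) (Fin d) ℂ where
  toFun ρ := ((d : ℂ) + 1)⁻¹ • (ρ.trace • (1 : Matrix (Fin d) (Fin d) ℂ) + ρ.transpose)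
  map_add' ρ σ := by
    simp [Matrix.trace_add, Matrix.transpose_add, add_smul, smul_add]
    module
  map_smul' c ρ := by
    simp [Matrix.trace_smul, Matrix.transpose_smul, smul_smul, smul_add]
    module

/-- The antisymmetric Werner-Holevo channel `Φ₋(ρ) = (Tr(ρ)·1 − ρᵀ)/(d−1)`. -/
noncomputable def whMinus (d : ℕ) :
    Matrix (Fin d) (Fin d) ℂ →ₗ[ℂ] Matrix (Fin d) (Fin d) ℂ where
  toFun ρ := ((d : ℂ) - 1)⁻¹ • (ρ.trace • (1 : Matrix (Fin d) (Fin d) ℂ) - ρ.transpose)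
  map_add' ρ σ := by
    simp [Matrix.trace_add, Matrix.transpose_add, add_smul]
    module
  map_smul' c ρ := by
    simp [Matrix.trace_smul, Matrix.transpose_smul, smul_smul]
    module

/-- The unitary (conjugation) channel `Φ_U(ρ) = U ρ Uᴴ`. -/
noncomputable def conjChannel {d : ℕ} (U : Matrix (Fin d) (Fin d) ℂ) :
    Matrix (Fin d) (Fin d) ℂ →ₗ[ℂ] Matrix (Fin d) (Fin d) ℂ where
  toFun ρ := U * ρ * Uᴴ
  map_add' ρ σ := by simp [Matrix.mul_add, Matrix.add_mul]
  map_smul' c ρ := by simp [Matrix.mul_smul, Matrix.smul_mul]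


-- ===== auxiliary lemmas =====
section Aux

open scoped MatrixOrder in
lemma posSemidefSqrt_eq_cfc {n : Type*} [Fintype n] [DecidableEq n] {A : Matrix n n ℂ}
    (hA : A.PosSemidef) : posSemidefSqrt hA = CFC.sqrt A := by
  rw [CFC.sqrt_eq_cfc, cfc_nnreal_eq_real _ A, hA.1.cfc_eq]
  simp only [IsHermitian.cfc, Unitary.conjStarAlgAut_apply, posSemidefSqrt]
  congr 3
  funext i
  simp [Real.coe_toNNReal', max_eq_left (hA.eigenvalues_nonneg i)]

open scoped MatrixOrder in
lemma posSemidefSqrt_posSemidef {n : Type*} [Fintype n] [DecidableEq n] {A : Matrix n n ℂ}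
    (hA : A.PosSemidef) : (posSemidefSqrt hA).PosSemidef := by
  rw [posSemidefSqrt_eq_cfc]
  exact Matrix.nonneg_iff_posSemidef.mp (CFC.sqrt_nonneg _)

open scoped MatrixOrder in
lemma posSemidefSqrt_mul_self {n : Type*} [Fintype n] [DecidableEq n] {A : Matrix n n ℂ}
    (hA : A.PosSemidef) : posSemidefSqrt hA * posSemidefSqrt hA = A := by
  rw [posSemidefSqrt_eq_cfc]
  exact CFC.sqrt_mul_sqrt_self A (Matrix.nonneg_iff_posSemidef.mpr hA)

open scoped MatrixOrder in
lemma posSemidefSqrt_unique {n : Type*} [Fintype n] [DecidableEq n] {A B : Matrix n n ℂ}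
    (hA : A.PosSemidef) (hB : B.PosSemidef) (h : B ^ 2 = A) : posSemidefSqrt hA = B :=
  (posSemidefSqrt_eq_cfc hA).trans
    (CFC.sqrt_unique ((sq B).symm.trans h) (Matrix.nonneg_iff_posSemidef.mpr hB))

lemma matAbs_eq' {n : Type*} [Fintype n] [DecidableEq n] {A B : Matrix n n ℂ}
    (hB : B.PosSemidef) (h : B ^ 2 = Aᴴ * A) : matAbs A = B :=
  posSemidefSqrt_unique (Matrix.posSemidef_conjTranspose_mul_self A) hB h

lemma matSqrt_eq' {n : Type*} [Fintype n] [DecidableEq n] {σ B : Matrix n n ℂ}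
    (hσ : σ.PosSemidef) (hB : B.PosSemidef) (h : B ^ 2 = σ) : matSqrt σ = B := by
  rw [matSqrt, dif_pos hσ]
  exact posSemidefSqrt_unique hσ hB h

lemma matAbs_diagonal_real' {n : Type*} [Fintype n] [DecidableEq n] (a : n → ℝ) :
    matAbs (Matrix.diagonal fun i => (a i : ℂ)) =
      Matrix.diagonal fun i => ((|a i| : ℝ) : ℂ) := by
  apply matAbs_eq'
  · exact Matrix.posSemidef_diagonal_iff.mpr fun i => by
      rw [Complex.le_def]; simp [abs_nonneg]
  · rw [Matrix.diagonal_conjTranspose, pow_two, Matrix.diagonal_mul_diagonal,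
      Matrix.diagonal_mul_diagonal]
    congr 1
    funext i
    simp [← Complex.ofReal_mul, ← sq_abs (a i), sq]

lemma traceNorm_diagonal_real' {n : Type*} [Fintype n] [DecidableEq n] (a : n → ℝ) :
    traceNorm (Matrix.diagonal fun i => (a i : ℂ)) = ∑ i, |a i| := by
  rw [traceNorm, matAbs_diagonal_real', Matrix.trace_diagonal, Complex.re_sum]
  simp

lemma diag_re_nonneg' {n : Type*} [Fintype n] [DecidableEq n] {P : Matrix n n ℂ}
    (hP : P.PosSemidef) (i : n) : 0 ≤ (P i i).re := by
  exact (Complex.nonneg_iff.mp hP.diag_nonneg).1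

lemma traceNorm_sub_le' {n : Type*} [Fintype n] [DecidableEq n]
    {A B : Matrix n n ℂ} (hA : A.PosSemidef) (hB : B.PosSemidef) :
    traceNorm (A - B) ≤ (A.trace).re + (B.trace).re := by
  set H := A - B with hHdef
  have hH : H.IsHermitian := hA.1.sub hB.1
  set U : Matrix n n ℂ := (hH.eigenvectorUnitary : Matrix n n ℂ) with hU
  have hUU : Uᴴ * U = 1 := by
    simpa [Matrix.star_eq_conjTranspose] using
      Matrix.mem_unitaryGroup_iff'.mp hH.eigenvectorUnitary.2
  have hUU' : U * Uᴴ = 1 := by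
    simpa [Matrix.star_eq_conjTranspose] using
      Matrix.mem_unitaryGroup_iff.mp hH.eigenvectorUnitary.2
  set lam := hH.eigenvalues with hlam
  have habs : matAbs H = U * Matrix.diagonal (fun i => ((|lam i| : ℝ) : ℂ)) * Uᴴ := by
    apply matAbs_eq'
    · exact (Matrix.posSemidef_diagonal_iff.mpr fun i => by
        rw [Complex.le_def]; simp [abs_nonneg]).mul_mul_conjTranspose_same U
    · have hspec : H = U * Matrix.diagonal (RCLike.ofReal ∘ lam) * Uᴴ := by
        simpa [Matrix.star_eq_conjTranspose] using hH.spectral_theorem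
      have key : ∀ X : Matrix n n ℂ, Uᴴ * (U * X) = X := fun X => by
        rw [← Matrix.mul_assoc, hUU, Matrix.one_mul]
      have hDD : Matrix.diagonal (fun i => ((|lam i| : ℝ) : ℂ)) *
          Matrix.diagonal (fun i => ((|lam i| : ℝ) : ℂ)) =
          Matrix.diagonal (RCLike.ofReal ∘ lam) * Matrix.diagonal (RCLike.ofReal ∘ lam) := by
        rw [Matrix.diagonal_mul_diagonal, Matrix.diagonal_mul_diagonal]
        congr 1
        funext i
        simp [← Complex.ofReal_mul, ← sq_abs (lam i), sq]
      rw [pow_two, hH.eq, hspec]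
      simp only [Matrix.mul_assoc, key]
      simp only [← Matrix.mul_assoc]
      rw [Matrix.mul_assoc U, Matrix.mul_assoc U, hDD]
      simp only [Matrix.mul_assoc]
  have htr : traceNorm H = ∑ i, |lam i| := by
    rw [traceNorm, habs, Matrix.trace_mul_cycle, hUU, Matrix.one_mul, Matrix.trace_diagonal]
    rw [Complex.re_sum]
    simp
  rw [htr]
  have hdiag : Uᴴ * H * U = Matrix.diagonal (RCLike.ofReal ∘ lam) := by
    simpa [Matrix.star_eq_conjTranspose, Unitary.conjStarAlgAut_star_apply] using
      hH.conjStarAlgAut_star_eigenvectorUnitary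
  set P := Uᴴ * A * U with hP
  set Q := Uᴴ * B * U with hQ
  have hPpsd : P.PosSemidef := hA.conjTranspose_mul_mul_same U
  have hQpsd : Q.PosSemidef := hB.conjTranspose_mul_mul_same U
  have hlam_eq : ∀ i, lam i = (P i i).re - (Q i i).re := by
    intro i
    have h1 : (Uᴴ * H * U) i i = P i i - Q i i := by
      simp [hP, hQ, hHdef, Matrix.mul_sub, Matrix.sub_mul, Matrix.sub_apply]
    rw [hdiag] at h1
    have := congrArg Complex.re h1
    simpa using this
  calc ∑ i, |lam i| ≤ ∑ i, ((P i i).re + (Q i i).re) := by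
        refine Finset.sum_le_sum fun i _ => ?_
        rw [hlam_eq i]
        exact (abs_sub _ _).trans (by
          rw [abs_of_nonneg (diag_re_nonneg' hPpsd i), abs_of_nonneg (diag_re_nonneg' hQpsd i)])
    _ = (P.trace).re + (Q.trace).re := by
        rw [Finset.sum_add_distrib]
        simp [Matrix.trace, Matrix.diag, Complex.re_sum]
    _ = (A.trace).re + (B.trace).re := by
        have hPt : P.trace = A.trace := by
          rw [hP, Matrix.trace_mul_cycle, hUU', Matrix.one_mul]
        have hQt : Q.trace = B.trace := by
          rw [hQ, Matrix.trace_mul_cycle, hUU', Matrix.one_mul]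
        rw [hPt, hQt]

lemma kron_conjTranspose' {m n : Type*} [Fintype m] [Fintype n]
    (A : Matrix m m ℂ) (B : Matrix n n ℂ) : (A ⊗ₖ B)ᴴ = Aᴴ ⊗ₖ Bᴴ := by
  ext ⟨a, b⟩ ⟨c, d⟩
  simp [Matrix.conjTranspose_apply, Matrix.kroneckerMap_apply, mul_comm]

lemma posSemidef_one_kron' {m n : Type*} [Fintype m] [Fintype n] [DecidableEq m] [DecidableEq n]
    {C : Matrix n n ℂ} (hC : C.PosSemidef) :
    ((1 : Matrix m m ℂ) ⊗ₖ C).PosSemidef := by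
  obtain ⟨R, hR⟩ : ∃ R : Matrix n n ℂ, C = Rᴴ * R := ⟨posSemidefSqrt hC, by
    rw [(posSemidefSqrt_posSemidef hC).1.eq, posSemidefSqrt_mul_self]⟩
  rw [hR]
  have h1 : (1 : Matrix m m ℂ) ⊗ₖ (Rᴴ * R)
      = ((1 : Matrix m m ℂ) ⊗ₖ R)ᴴ * ((1 : Matrix m m ℂ) ⊗ₖ R) := by
    rw [kron_conjTranspose', ← Matrix.mul_kronecker_mul, Matrix.conjTranspose_one,
      Matrix.one_mul]
  rw [h1]
  exact Matrix.posSemidef_conjTranspose_mul_self _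

lemma traceNorm_kron_left_iso {dn : ℕ} (B : Matrix (Fin dn) (Fin dn) ℂ)
    (Pm : Matrix (Fin 2) (Fin 2) ℂ) (hPm : Pmᴴ * Pm = 1) :
    traceNorm (Pm ⊗ₖ B) = 2 * traceNorm B := by
  have habs : matAbs (Pm ⊗ₖ B) = (1 : Matrix (Fin 2) (Fin 2) ℂ) ⊗ₖ matAbs B := by
    apply matAbs_eq'
    · exact posSemidef_one_kron' (posSemidefSqrt_posSemidef (Matrix.posSemidef_conjTranspose_mul_self B))
    · rw [pow_two, ← Matrix.mul_kronecker_mul, Matrix.one_mul, kron_conjTranspose',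
        ← Matrix.mul_kronecker_mul, hPm]
      exact congrArg (fun X => (1 : Matrix (Fin 2) (Fin 2) ℂ) ⊗ₖ X)
        (posSemidefSqrt_mul_self (Matrix.posSemidef_conjTranspose_mul_self B))
  rw [traceNorm, habs, Matrix.trace_kronecker, Matrix.trace_one, traceNorm]
  simp

lemma choi_eq_of_form {d : ℕ} (v : Fin d → ℂ) (Pm : Matrix (Fin 2) (Fin 2) ℂ)
    (L : Matrix (Fin d) (Fin d) ℂ →ₗ[ℂ] Matrix (Fin 2) (Fin 2) ℂ)
    (hL : ∀ ρ, L ρ = (ρ * Matrix.diagonal v).trace • Pm) :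
    choi L = Pm ⊗ₖ Matrix.diagonal v := by
  ext ⟨a, i⟩ ⟨b, j⟩
  simp only [choi, Matrix.sum_apply, Matrix.kroneckerMap_apply, hL, Matrix.smul_apply,
    smul_eq_mul, Matrix.trace, Matrix.diag, Matrix.mul_diagonal, Matrix.single,
    Matrix.of_apply, Matrix.diagonal_apply]
  simp [Finset.sum_ite_eq, ite_and, Finset.mul_sum, Finset.sum_mul]
  by_cases h : i = j
  · simp [h, mul_comm]
  · rw [if_neg (fun h' => absurd h'.symm h), if_neg h]

end Aux


/-- for diagonal two-outcome POVMs `{M₀, 1−M₀}`, `{N₀, 1−N₀}`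
with `M₀ = diag(μ)`, `N₀ = diag(ν)`, entries in `[0,1]` and `μ ≠ ν`, the
measurement channels form a MEWC pair iff exactly one index has `μ_i ≠ ν_i`. -/
theorem stmt12 {d : ℕ} (hd : 1 ≤ d) (μ ν : Fin d → ℝ)
    (hμ : ∀ i, μ i ∈ Set.Icc (0 : ℝ) 1) (hν : ∀ i, ν i ∈ Set.Icc (0 : ℝ) 1)
    (hne : μ ≠ ν)
    (M₀ N₀ : Matrix (Fin d) (Fin d) ℂ)
    (hM₀ : M₀ = Matrix.diagonal fun i => (μ i : ℂ))
    (hN₀ : N₀ = Matrix.diagonal fun i => (ν i : ℂ)) :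
    diamondNorm (measChannel ![M₀, 1 - M₀] - measChannel ![N₀, 1 - N₀])
      = d * MENorm (measChannel ![M₀, 1 - M₀] - measChannel ![N₀, 1 - N₀])
    ↔ ∃! i : Fin d, μ i ≠ ν i := by
  classical
  set c : Fin d → ℝ := fun i => μ i - ν i with hc
  set Δ := measChannel ![M₀, 1 - M₀] - measChannel ![N₀, 1 - N₀] with hΔdef
  set Pm : Matrix (Fin 2) (Fin 2) ℂ := Matrix.diagonal ![1, -1] with hPmdef
  have hPmPm : Pmᴴ * Pm = 1 := by
    rw [hPmdef, Matrix.diagonal_conjTranspose, Matrix.diagonal_mul_diagonal]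
    ext i j
    fin_cases i <;> fin_cases j <;>
      simp [Matrix.diagonal_apply, Matrix.one_apply]
  set Dc : Matrix (Fin d) (Fin d) ℂ := Matrix.diagonal (fun i => (c i : ℂ)) with hDc
  have hMN : M₀ - N₀ = Dc := by
    rw [hM₀, hN₀, Matrix.diagonal_sub, hDc]
    refine congrArg Matrix.diagonal (funext fun i => ?_)
    simp [hc]
  -- the action of Δ
  have hΔ : ∀ ρ, Δ ρ = (ρ * Dc).trace • Pm := by
    intro ρ
    have hPm' : Pm = Matrix.single (0 : Fin 2) 0 (1 : ℂ)
        - Matrix.single 1 1 1 := by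
      ext a b
      fin_cases a <;> fin_cases b <;>
        simp [hPmdef, Matrix.single, Matrix.diagonal_apply]
    rw [hΔdef, LinearMap.sub_apply, hPm', ← hMN]
    simp only [measChannel, LinearMap.coe_mk, AddHom.coe_mk, Fin.sum_univ_two,
      Matrix.cons_val_zero, Matrix.cons_val_one, Matrix.head_cons,
      Matrix.mul_sub, Matrix.mul_one, Matrix.trace_sub, sub_smul, smul_sub]
    module
  -- Choi operator of Δ
  have hchoi : choi Δ = Pm ⊗ₖ Dc := choi_eq_of_form _ _ _ hΔ
  -- trace norm of choi
  have hMENorm : (d : ℝ) * MENorm Δ = 2 * ∑ i, |c i| := by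
    have hdne : (d : ℝ) ≠ 0 := Nat.cast_ne_zero.mpr (by omega)
    rw [MENorm, hchoi, hDc, traceNorm_kron_left_iso _ _ hPmPm, traceNorm_diagonal_real',
      mul_comm, div_mul_cancel₀ _ hdne]
  -- maximizer index
  have hne0 : ∃ j, c j ≠ 0 := by
    by_contra h
    push_neg at h
    exact hne (funext fun i => by have := h i; rw [hc] at this; simpa [sub_eq_zero] using this)
  obtain ⟨i₀, -, hi₀⟩ := Finset.exists_max_image Finset.univ (fun i => |c i|)
    ⟨hne0.choose, Finset.mem_univ _⟩
  have hi₀' : ∀ i, |c i| ≤ |c i₀| := fun i => hi₀ i (Finset.mem_univ i)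
  -- the density matrix attaining the sup
  set σ₀ : Matrix (Fin d) (Fin d) ℂ :=
    Matrix.diagonal (fun i => if i = i₀ then (1 : ℂ) else 0) with hσ₀
  have hσ₀psd : σ₀.PosSemidef := Matrix.posSemidef_diagonal_iff.mpr fun i => by
    split_ifs
    · exact zero_le_one
    · exact le_refl 0
  have hσ₀dens : IsDensity σ₀ := by
    refine ⟨hσ₀psd, ?_⟩
    rw [hσ₀, Matrix.trace_diagonal]
    simp
  haveI : Nonempty {σ : Matrix (Fin d) (Fin d) ℂ // IsDensity σ} := ⟨⟨σ₀, hσ₀dens⟩⟩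
  -- the function inside the sup
  set f : {σ : Matrix (Fin d) (Fin d) ℂ // IsDensity σ} → ℝ := fun σ =>
    traceNorm (((1 : Matrix (Fin 2) (Fin 2) ℂ) ⊗ₖ matSqrt σ.1) * choi Δ *
      ((1 : Matrix (Fin 2) (Fin 2) ℂ) ⊗ₖ matSqrt σ.1)) with hf
  have hdia : diamondNorm Δ = ⨆ σ, f σ := rfl
  have hfval : ∀ σ, f σ = 2 * traceNorm (matSqrt σ.1 * Dc * matSqrt σ.1) := by
    intro σ
    rw [hf]
    simp only
    rw [hchoi, ← Matrix.mul_kronecker_mul, ← Matrix.mul_kronecker_mul,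
      Matrix.one_mul, Matrix.mul_one]
    exact traceNorm_kron_left_iso _ _ hPmPm
  -- upper bound
  have hbound : ∀ σ, f σ ≤ 2 * |c i₀| := by
    rintro ⟨σ, hσpsd, hσtr⟩
    rw [hfval]
    simp only
    set S := matSqrt σ with hS
    have hSdef : S = posSemidefSqrt hσpsd := dif_pos hσpsd
    have hSpsd : S.PosSemidef := hSdef ▸ posSemidefSqrt_posSemidef hσpsd
    have hSS : S * S = σ := hSdef ▸ posSemidefSqrt_mul_self hσpsd
    have hSH : Sᴴ = S := hSpsd.1
    set p : Fin d → ℝ := fun i => max (c i) 0 with hp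
    set q : Fin d → ℝ := fun i => max (-c i) 0 with hq
    have hpq_sub : ∀ i, p i - q i = c i := by
      intro i
      rcases le_total (c i) 0 with h | h
      · rw [hp, hq]; simp only
        rw [max_eq_right h, max_eq_left (neg_nonneg.mpr h)]; ring
      · rw [hp, hq]; simp only
        rw [max_eq_left h, max_eq_right (neg_nonpos.mpr h)]; ring
    have hpq_add : ∀ i, p i + q i = |c i| := by
      intro i
      rcases le_total (c i) 0 with h | h
      · rw [hp, hq]; simp only
        rw [max_eq_right h, max_eq_left (neg_nonneg.mpr h), abs_of_nonpos h]; ring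
      · rw [hp, hq]; simp only
        rw [max_eq_left h, max_eq_right (neg_nonpos.mpr h), abs_of_nonneg h]; ring
    set Dp : Matrix (Fin d) (Fin d) ℂ := Matrix.diagonal (fun i => (p i : ℂ)) with hDp
    set Dq : Matrix (Fin d) (Fin d) ℂ := Matrix.diagonal (fun i => (q i : ℂ)) with hDq
    have hsplit : Dc = Dp - Dq := by
      rw [hDp, hDq, Matrix.diagonal_sub, hDc]
      refine congrArg Matrix.diagonal (funext fun i => ?_)
      show ((c i : ℝ) : ℂ) = ((p i : ℝ) : ℂ) - ((q i : ℝ) : ℂ)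
      rw [← hpq_sub i]
      push_cast
      ring
    have hmul_split : S * Dc * S = S * Dp * S - S * Dq * S := by
      rw [hsplit, Matrix.mul_sub, Matrix.sub_mul]
    have hDp_psd : Dp.PosSemidef := Matrix.posSemidef_diagonal_iff.mpr fun i => by
      rw [Complex.le_def]; simp [hp, le_max_right]
    have hDq_psd : Dq.PosSemidef := Matrix.posSemidef_diagonal_iff.mpr fun i => by
      rw [Complex.le_def]; simp [hq, le_max_right]
    have hA'psd : (S * Dp * S).PosSemidef := by
      have := hDp_psd.mul_mul_conjTranspose_same S
      rwa [hSH] at this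
    have hB'psd : (S * Dq * S).PosSemidef := by
      have := hDq_psd.mul_mul_conjTranspose_same S
      rwa [hSH] at this
    have htrp : ∀ (r : Fin d → ℝ), ((S * Matrix.diagonal (fun i => (r i : ℂ)) * S).trace).re
        = ∑ i, (σ i i).re * r i := by
      intro r
      rw [Matrix.trace_mul_cycle, hSS, Matrix.trace]
      rw [Complex.re_sum]
      refine Finset.sum_congr rfl fun i _ => ?_
      simp [Matrix.diag, Matrix.mul_diagonal, Complex.mul_re]
    have hσdiag_nonneg : ∀ i, 0 ≤ (σ i i).re := diag_re_nonneg' hσpsd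
    have hσdiag_sum : ∑ i, (σ i i).re = 1 := by
      have := congrArg Complex.re hσtr
      rw [Matrix.trace, Complex.re_sum] at this
      simpa [Matrix.diag] using this
    have hub : traceNorm (S * Dc * S) ≤ |c i₀| := by
      rw [hmul_split]
      refine (traceNorm_sub_le' hA'psd hB'psd).trans ?_
      rw [hDp, hDq, htrp p, htrp q, ← Finset.sum_add_distrib]
      calc ∑ i, ((σ i i).re * p i + (σ i i).re * q i)
          = ∑ i, (σ i i).re * |c i| := by
            refine Finset.sum_congr rfl fun i _ => ?_
            rw [← hpq_add i]; ring
        _ ≤ ∑ i, (σ i i).re * |c i₀| := Finset.sum_le_sum fun i _ =>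
            mul_le_mul_of_nonneg_left (hi₀' i) (hσdiag_nonneg i)
        _ = |c i₀| := by rw [← Finset.sum_mul, hσdiag_sum, one_mul]
    linarith
  -- value at σ₀
  have hattain : f ⟨σ₀, hσ₀dens⟩ = 2 * |c i₀| := by
    rw [hfval]
    simp only
    have hsq : matSqrt σ₀ = σ₀ := by
      refine matSqrt_eq' hσ₀psd hσ₀psd ?_
      rw [pow_two, hσ₀, Matrix.diagonal_mul_diagonal]
      refine congrArg Matrix.diagonal (funext fun i => ?_)
      split_ifs <;> simp
    rw [hsq, hσ₀, hDc, Matrix.diagonal_mul_diagonal, Matrix.diagonal_mul_diagonal]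
    have : (Matrix.diagonal fun i => (if i = i₀ then (1:ℂ) else 0) * (c i : ℂ) *
        (if i = i₀ then (1:ℂ) else 0))
        = Matrix.diagonal fun i => ((if i = i₀ then c i₀ else 0 : ℝ) : ℂ) := by
      refine congrArg Matrix.diagonal (funext fun i => ?_)
      split_ifs with h
      · subst h; push_cast; ring
      · push_cast; ring
    rw [this, traceNorm_diagonal_real']
    have habsval : ∀ i ∈ Finset.univ,
        |if i = i₀ then c i₀ else 0| = if i = i₀ then |c i₀| else 0 := by
      intro i _
      split_ifs <;> simp
    rw [Finset.sum_congr rfl habsval, Finset.sum_ite_eq' Finset.univ i₀ fun _ => |c i₀|]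
    simp
  -- the diamond norm
  have hdiamond : diamondNorm Δ = 2 * |c i₀| := by
    rw [hdia]
    refine le_antisymm (ciSup_le hbound) ?_
    have hb : BddAbove (Set.range f) := ⟨2 * |c i₀|, by rintro x ⟨σ, rfl⟩; exact hbound σ⟩
    have := le_ciSup hb ⟨σ₀, hσ₀dens⟩
    rwa [hattain] at this
  rw [hdiamond, hMENorm]
  -- final arithmetic equivalence
  have habs_nonneg : ∀ i : Fin d, 0 ≤ |c i| := fun i => abs_nonneg _
  constructor
  · intro h
    have h' : |c i₀| = ∑ i, |c i| := by linarith
    have hrest : ∑ i ∈ Finset.univ.erase i₀, |c i| = 0 := by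
      have := Finset.add_sum_erase Finset.univ (fun i => |c i|) (Finset.mem_univ i₀)
      linarith
    have hzero : ∀ i, i ≠ i₀ → c i = 0 := by
      intro i hi
      have := (Finset.sum_eq_zero_iff_of_nonneg fun j _ => habs_nonneg j).mp hrest i
        (Finset.mem_erase.mpr ⟨hi, Finset.mem_univ i⟩)
      exact abs_eq_zero.mp this
    have hci₀ : c i₀ ≠ 0 := by
      intro h0
      obtain ⟨j, hj⟩ := hne0
      rcases eq_or_ne j i₀ with rfl | hji
      · exact hj h0
      · exact hj (hzero j hji)
    refine ⟨i₀, by simpa [hc, sub_ne_zero] using hci₀, fun j hj => ?_⟩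
    by_contra hji
    exact (by simpa [hc, sub_ne_zero] using hj : c j ≠ 0) (hzero j hji)
  · rintro ⟨i₁, hi₁, huniq⟩
    have hi₁' : c i₁ ≠ 0 := by simpa [hc, sub_ne_zero] using hi₁
    have hzero : ∀ i, i ≠ i₁ → c i = 0 := by
      intro i hi
      by_contra h0
      exact hi (huniq i (by simpa [hc, sub_ne_zero] using h0))
    have hsum : ∑ i, |c i| = |c i₁| :=
      Finset.sum_eq_single i₁ (fun j _ hj => by rw [hzero j hj, abs_zero]) (fun h => absurd (Finset.mem_univ i₁) h)
    have hle : |c i₀| ≤ |c i₁| := by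
      rcases eq_or_ne i₀ i₁ with rfl | h
      · rfl
      · rw [hzero i₀ h, abs_zero]; exact habs_nonneg i₁
    have : |c i₀| = |c i₁| := le_antisymm hle (hi₀' i₁)
    rw [hsum, this]


end
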